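/- Let 0 < ε < 1 and let (f, g) be a closed holomorphic 1-form on the Hartogs figure H_ε, i.e. f, g : ℂ × ℂ → ℂ are holomorphic on H_ε and ∂f/∂w = ∂g/∂z on H_ε. Then there exists a closed holomorphic 1-form (F, G) on the bidisk D (F, G holomorphic on D with ∂F/∂w = ∂G/∂z on D) such that F = f and G = g on H_ε. -/

import Mathlib

/-- The open unit bidisk in `ℂ × ℂ`. -/
def bidisk : Set (ℂ × ℂ) := {p | ‖p.1‖ < 1 ∧ ‖p.2‖ < 1}

/-- The Hartogs figure `H_ε` inside the bidisk. -/
def hartogsFigure (ε : ℝ) : Set (ℂ × ℂ) :=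
  {p | (‖p.1‖ < 1 ∧ ‖p.2‖ < 1) ∧
    (‖p.1‖ < ε ∨ ‖p.2‖ > 1 - ε)}

open Complex Metric Set Filter intervalIntegral MeasureTheory

lemma slice_snd_hasDerivAt {φ : ℂ × ℂ → ℂ} {L : ℂ × ℂ →L[ℂ] ℂ} {z w : ℂ}
    (h : HasFDerivAt φ L (z, w)) : HasDerivAt (fun w' => φ (z, w')) (L (0, 1)) w := by
  have h1 : HasFDerivAt (fun w' : ℂ => (z, w')) ((0 : ℂ →L[ℂ] ℂ).prod (ContinuousLinearMap.id ℂ ℂ)) w :=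
    (hasFDerivAt_const z w).prodMk (hasFDerivAt_id w)
  have := (h.comp w h1).hasDerivAt
  simpa [Function.comp_def] using this

lemma slice_fst_hasDerivAt {φ : ℂ × ℂ → ℂ} {L : ℂ × ℂ →L[ℂ] ℂ} {z w : ℂ}
    (h : HasFDerivAt φ L (z, w)) : HasDerivAt (fun z' => φ (z', w)) (L (1, 0)) z := by
  have h1 : HasFDerivAt (fun z' : ℂ => (z', w)) ((ContinuousLinearMap.id ℂ ℂ).prod 0) z :=
    (hasFDerivAt_id z).prodMk (hasFDerivAt_const w z)
  have := (h.comp z h1).hasDerivAt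
  simpa [Function.comp_def] using this

lemma deriv_slice_snd {φ : ℂ × ℂ → ℂ} {z w : ℂ} (h : DifferentiableAt ℂ φ (z, w)) :
    deriv (fun w' => φ (z, w')) w = fderiv ℂ φ (z, w) (0, 1) :=
  (slice_snd_hasDerivAt h.hasFDerivAt).deriv

lemma deriv_slice_fst {φ : ℂ × ℂ → ℂ} {z w : ℂ} (h : DifferentiableAt ℂ φ (z, w)) :
    deriv (fun z' => φ (z', w)) z = fderiv ℂ φ (z, w) (1, 0) :=
  (slice_fst_hasDerivAt h.hasFDerivAt).deriv

lemma clm_intervalIntegral_apply {φ : ℝ → (ℂ × ℂ) →L[ℂ] ℂ} {a b : ℝ}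
    (h : IntervalIntegrable φ MeasureTheory.volume a b) (v : ℂ × ℂ) :
    (∫ t in a..b, φ t) v = ∫ t in a..b, φ t v := by
  rw [intervalIntegral_eq_integral_uIoc, intervalIntegral_eq_integral_uIoc]
  rw [ContinuousLinearMap.smul_apply]
  congr 1
  exact ContinuousLinearMap.integral_apply (intervalIntegrable_iff.mp h) v

lemma clm_norm_smul (a : ℂ) (T : (ℂ × ℂ) →L[ℂ] ℂ) : ‖a • T‖ = ‖a‖ * ‖T‖ :=
  norm_smul a T

lemma norm_fderiv_le_of_closedBall {φ : ℂ × ℂ → ℂ} {U : Set (ℂ × ℂ)} (hU : IsOpen U)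
    (hφ : DifferentiableOn ℂ φ U) {q : ℂ × ℂ} {s M : ℝ} (hs : 0 < s)
    (hq : closedBall q s ⊆ U) (hM : ∀ x ∈ closedBall q s, ‖φ x‖ ≤ M) :
    ‖fderiv ℂ φ q‖ ≤ 2 * (M / s) := by
  have hqU : q ∈ U := hq (mem_closedBall_self hs.le)
  have hM0 : 0 ≤ M := le_trans (norm_nonneg _) (hM q (mem_closedBall_self hs.le))
  have hsub1 : ∀ z ∈ closedBall q.1 s, (z, q.2) ∈ closedBall q s := by
    intro z hz
    simp only [mem_closedBall] at hz ⊢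
    rw [Prod.dist_eq]
    simp [hz, hs.le]
  have hsub2 : ∀ w ∈ closedBall q.2 s, (q.1, w) ∈ closedBall q s := by
    intro w hw
    simp only [mem_closedBall] at hw ⊢
    rw [Prod.dist_eq]
    simp [hw, hs.le]
  have key : ∀ (ψ : ℂ → ℂ) (c : ℂ), (∀ y ∈ closedBall c s, DifferentiableAt ℂ ψ y) →
      (∀ y ∈ closedBall c s, ‖ψ y‖ ≤ M) → ‖deriv ψ c‖ ≤ M / s := by
    intro ψ c hdiff hbd
    refine Complex.norm_deriv_le_of_forall_mem_sphere_norm_le hs ?_ ?_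
    · constructor
      · exact fun y hy => (hdiff y (ball_subset_closedBall hy)).differentiableWithinAt
      · refine ContinuousOn.mono ?_ closure_ball_subset_closedBall
        exact fun y hy => (hdiff y hy).continuousAt.continuousWithinAt
    · exact fun y hy => hbd y (sphere_subset_closedBall hy)
  have d1 : ∀ y ∈ closedBall q.1 s, DifferentiableAt ℂ (fun z => φ (z, q.2)) y := by
    intro y hy
    have : DifferentiableAt ℂ φ (y, q.2) := hφ.differentiableAt (hU.mem_nhds (hq (hsub1 y hy)))
    exact this.comp y (differentiableAt_id.prodMk (differentiableAt_const _))
  have d2 : ∀ y ∈ closedBall q.2 s, DifferentiableAt ℂ (fun w => φ (q.1, w)) y := by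
    intro y hy
    have : DifferentiableAt ℂ φ (q.1, y) := hφ.differentiableAt (hU.mem_nhds (hq (hsub2 y hy)))
    exact this.comp y ((differentiableAt_const _).prodMk differentiableAt_id)
  have b1 : ‖deriv (fun z => φ (z, q.2)) q.1‖ ≤ M / s :=
    key _ _ d1 (fun y hy => hM _ (hsub1 y hy))
  have b2 : ‖deriv (fun w => φ (q.1, w)) q.2‖ ≤ M / s :=
    key _ _ d2 (fun y hy => hM _ (hsub2 y hy))
  have hdiffq' : DifferentiableAt ℂ φ (q.1, q.2) := by
    rw [Prod.mk.eta]; exact hφ.differentiableAt (hU.mem_nhds hqU)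
  have e1 : fderiv ℂ φ q (1, 0) = deriv (fun z => φ (z, q.2)) q.1 := by
    rw [deriv_slice_fst hdiffq', Prod.mk.eta]
  have e2 : fderiv ℂ φ q (0, 1) = deriv (fun w => φ (q.1, w)) q.2 := by
    rw [deriv_slice_snd hdiffq', Prod.mk.eta]
  refine ContinuousLinearMap.opNorm_le_bound _ (by positivity) ?_
  intro v
  have hv : v = v.1 • ((1 : ℂ), (0 : ℂ)) + v.2 • ((0 : ℂ), (1 : ℂ)) := by
    simp [Prod.ext_iff]
  have hfv : fderiv ℂ φ q v = v.1 • fderiv ℂ φ q (1, 0) + v.2 • fderiv ℂ φ q (0, 1) := by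
    conv_lhs => rw [hv]
    rw [map_add, ContinuousLinearMap.map_smul, ContinuousLinearMap.map_smul]
  rw [hfv]
  have h1 : ‖v.1‖ ≤ ‖v‖ := norm_fst_le v
  have h2 : ‖v.2‖ ≤ ‖v‖ := norm_snd_le v
  calc ‖v.1 • fderiv ℂ φ q (1, 0) + v.2 • fderiv ℂ φ q (0, 1)‖
      ≤ ‖v.1‖ * ‖fderiv ℂ φ q (1, 0)‖ + ‖v.2‖ * ‖fderiv ℂ φ q (0, 1)‖ := by
        refine le_trans (norm_add_le _ _) ?_
        simp [norm_smul]
    _ ≤ ‖v.1‖ * (M / s) + ‖v.2‖ * (M / s) := by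
        rw [e1, e2]; gcongr
    _ ≤ ‖v‖ * (M / s) + ‖v‖ * (M / s) := by gcongr
    _ = 2 * (M / s) * ‖v‖ := by ring

lemma isOpen_hartogsFigure (ε : ℝ) : IsOpen (hartogsFigure ε) := by
  have h1 : Continuous fun p : ℂ × ℂ => ‖p.1‖ := continuous_norm.comp continuous_fst
  have h2 : Continuous fun p : ℂ × ℂ => ‖p.2‖ := continuous_norm.comp continuous_snd
  exact (((isOpen_lt h1 continuous_const).inter (isOpen_lt h2 continuous_const)).inter
    ((isOpen_lt h1 continuous_const).union (isOpen_lt continuous_const h2)))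

set_option maxHeartbeats 2000000 in
lemma cauchy_hasFDerivAt (ε r : ℝ) (hε0 : 0 < ε) (hε1 : ε < 1) (hr1 : 1 - ε < r) (hr2 : r < 1)
    (φ : ℂ × ℂ → ℂ) (hφ : DifferentiableOn ℂ φ (hartogsFigure ε))
    (z w : ℂ) (hz : ‖z‖ < 1) (hw : ‖w‖ < r) :
    ∃ L : (ℂ × ℂ) →L[ℂ] ℂ,
      HasFDerivAt (fun x : ℂ × ℂ =>
        ∫ θ in (0:ℝ)..(2 * Real.pi),
          (circleMap 0 r θ * I) * ((circleMap 0 r θ - x.2)⁻¹ * φ (x.1, circleMap 0 r θ))) L (z, w) ∧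
      L (0, 1) = ∫ θ in (0:ℝ)..(2 * Real.pi),
          (circleMap 0 r θ * I) * (φ (z, circleMap 0 r θ) * (((circleMap 0 r θ - w) ^ 2)⁻¹)) ∧
      L (1, 0) = ∫ θ in (0:ℝ)..(2 * Real.pi),
          (circleMap 0 r θ * I) * ((circleMap 0 r θ - w)⁻¹ * fderiv ℂ φ (z, circleMap 0 r θ) (1, 0)) := by
  have hr0 : 0 < r := by linarith
  have hHopen := isOpen_hartogsFigure ε
  have hnormc : ∀ θ : ℝ, ‖circleMap 0 r θ‖ = r := by
    intro θ
    rw [norm_circleMap_zero, abs_of_pos hr0]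
  have hmem : ∀ (a : ℂ), ‖a‖ < 1 → ∀ θ : ℝ, (a, circleMap 0 r θ) ∈ hartogsFigure ε := by
    intro a ha θ
    refine ⟨⟨ha, ?_⟩, Or.inr ?_⟩
    · show ‖circleMap 0 r θ‖ < 1
      rw [hnormc]; exact hr2
    · show ‖circleMap 0 r θ‖ > 1 - ε
      rw [hnormc]; exact hr1
  -- radii
  set δ : ℝ := min ((1 - ‖z‖) / 4) ((r - ‖w‖) / 2) with hδdef
  have hδ0 : 0 < δ := lt_min (by linarith) (by linarith)
  set s : ℝ := min ((1 - r) / 2) (min ((r - (1 - ε)) / 2) ((1 - ‖z‖) / 4)) with hsdef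
  have hs0 : 0 < s := lt_min (by linarith) (lt_min (by linarith) (by linarith))
  have hs1 : r + s < 1 := by
    have : s ≤ (1 - r) / 2 := min_le_left _ _
    linarith
  have hs2 : 1 - ε < r - s := by
    have : s ≤ (r - (1 - ε)) / 2 := le_trans (min_le_right _ _) (min_le_left _ _)
    linarith
  have hδs : δ + s ≤ (1 - ‖z‖) / 2 := by
    have h1 : δ ≤ (1 - ‖z‖) / 4 := min_le_left _ _
    have h2 : s ≤ (1 - ‖z‖) / 4 := le_trans (min_le_right _ _) (min_le_right _ _)
    linarith
  -- compact set K and bound M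
  set A : Set ℂ := {ζ : ℂ | r - s ≤ ‖ζ‖ ∧ ‖ζ‖ ≤ r + s} with hAdef
  set K : Set (ℂ × ℂ) := closedBall z (δ + s) ×ˢ A with hKdef
  have hAcompact : IsCompact A := by
    have hA : A = closedBall (0 : ℂ) (r + s) ∩ {ζ : ℂ | r - s ≤ ‖ζ‖} := by
      ext ζ
      simp only [hAdef, mem_inter_iff, mem_closedBall, Complex.dist_eq, sub_zero, mem_setOf_eq]
      tauto
    rw [hA]
    exact (isCompact_closedBall _ _).inter_right (isClosed_le continuous_const continuous_norm)
  have hKcompact : IsCompact K := (isCompact_closedBall _ _).prod hAcompact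
  have hKsubH : K ⊆ hartogsFigure ε := by
    rintro ⟨a, ζ⟩ ⟨ha, hζ⟩
    simp only [mem_closedBall, Complex.dist_eq] at ha
    have haz : ‖a‖ ≤ ‖z‖ + (δ + s) := by
      calc ‖a‖ = ‖a - z + z‖ := by ring_nf
        _ ≤ ‖a - z‖ + ‖z‖ := norm_add_le _ _
        _ ≤ ‖z‖ + (δ + s) := by linarith
    have ha1 : ‖a‖ < 1 := by
      have hz1 : ‖z‖ < 1 := hz
      linarith [hδs]
    obtain ⟨hζ1, hζ2⟩ := hζ
    exact ⟨⟨ha1, by linarith⟩, Or.inr (by simp only [gt_iff_lt]; linarith)⟩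
  obtain ⟨M0, hM0⟩ := hKcompact.exists_bound_of_continuousOn (hφ.continuousOn.mono hKsubH)
  set M : ℝ := max M0 0 with hMdef
  have hM : ∀ x ∈ K, ‖φ x‖ ≤ M := fun x hx => le_trans (hM0 x hx) (le_max_left _ _)
  have hMnn : 0 ≤ M := le_max_right _ _
  -- fderiv bound
  have hq_cb : ∀ (a : ℂ), ‖a - z‖ ≤ δ → ∀ θ : ℝ,
      closedBall (a, circleMap 0 r θ) s ⊆ K := by
    rintro a ha θ ⟨y1, y2⟩ hy
    rw [mem_closedBall, Prod.dist_eq, max_le_iff] at hy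
    obtain ⟨hy1, hy2⟩ := hy
    rw [Complex.dist_eq] at hy1 hy2
    constructor
    · rw [mem_closedBall, Complex.dist_eq]
      calc ‖y1 - z‖ = ‖y1 - a + (a - z)‖ := by ring_nf
        _ ≤ ‖y1 - a‖ + ‖a - z‖ := norm_add_le _ _
        _ ≤ s + δ := by linarith
        _ = δ + s := by ring
    · have hcabs : ‖circleMap 0 r θ‖ = r := by
        rw [hnormc]
      constructor
      · have : ‖circleMap 0 r θ‖ ≤ ‖circleMap 0 r θ - y2‖ + ‖y2‖ := by
          calc ‖circleMap 0 r θ‖ = ‖circleMap 0 r θ - y2 + y2‖ := by ring_nf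
            _ ≤ _ := norm_add_le _ _
        rw [hcabs] at this
        rw [← norm_neg (y2 - circleMap 0 r θ)] at hy2
        simp only [neg_sub] at hy2
        linarith
      · have : ‖y2‖ ≤ ‖y2 - circleMap 0 r θ‖ + ‖circleMap 0 r θ‖ := by
          calc ‖y2‖ = ‖y2 - circleMap 0 r θ + circleMap 0 r θ‖ := by ring_nf
            _ ≤ _ := norm_add_le _ _
        rw [hcabs] at this
        linarith
  have hfd : ∀ (a : ℂ), ‖a - z‖ ≤ δ → ∀ θ : ℝ,
      ‖fderiv ℂ φ (a, circleMap 0 r θ)‖ ≤ 2 * (M / s) := by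
    intro a ha θ
    exact norm_fderiv_le_of_closedBall hHopen hφ hs0 ((hq_cb a ha θ).trans hKsubH)
      (fun y hy => hM y (hq_cb a ha θ hy))
  -- geometry of the ball around (z, w)
  have hball : ∀ x : ℂ × ℂ, x ∈ ball (z, w) δ →
      ‖x.1‖ < 1 ∧ ‖x.1 - z‖ ≤ δ ∧
        ‖x.2‖ ≤ (‖w‖ + r) / 2 := by
    intro x hx
    rw [mem_ball, Prod.dist_eq, max_lt_iff] at hx
    obtain ⟨hx1, hx2⟩ := hx
    rw [Complex.dist_eq] at hx1 hx2
    have hδ1 : δ ≤ (1 - ‖z‖) / 4 := min_le_left _ _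
    have hδ2 : δ ≤ (r - ‖w‖) / 2 := min_le_right _ _
    refine ⟨?_, hx1.le, ?_⟩
    · have : ‖x.1‖ ≤ ‖x.1 - z‖ + ‖z‖ := by
        calc ‖x.1‖ = ‖x.1 - z + z‖ := by ring_nf
          _ ≤ _ := norm_add_le _ _
      linarith
    · have : ‖x.2‖ ≤ ‖x.2 - w‖ + ‖w‖ := by
        calc ‖x.2‖ = ‖x.2 - w + w‖ := by ring_nf
          _ ≤ _ := norm_add_le _ _
      linarith
  set d : ℝ := (r - ‖w‖) / 2 with hddef
  have hd0 : 0 < d := by simp only [hddef]; linarith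
  have hden : ∀ y : ℂ, ‖y‖ ≤ (‖w‖ + r) / 2 → ∀ θ : ℝ,
      d ≤ ‖circleMap 0 r θ - y‖ := by
    intro y hy θ
    have h1 : ‖circleMap 0 r θ‖ ≤ ‖circleMap 0 r θ - y‖ + ‖y‖ := by
      calc ‖circleMap 0 r θ‖ = ‖circleMap 0 r θ - y + y‖ := by ring_nf
        _ ≤ _ := norm_add_le _ _
    have h2 : ‖circleMap 0 r θ‖ = r := by rw [hnormc]
    rw [h2] at h1
    simp only [hddef]
    linarith
  have hne : ∀ y : ℂ, ‖y‖ ≤ (‖w‖ + r) / 2 → ∀ θ : ℝ,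
      circleMap 0 r θ - y ≠ 0 := by
    intro y hy θ h0
    have := hden y hy θ
    rw [h0] at this
    simp only [norm_zero] at this
    linarith
  -- the pieces
  set fstL : (ℂ × ℂ) →L[ℂ] ℂ := ContinuousLinearMap.fst ℂ ℂ ℂ with hfstLdef
  set sndL : (ℂ × ℂ) →L[ℂ] ℂ := ContinuousLinearMap.snd ℂ ℂ ℂ with hsndLdef
  have hfstn : ‖fstL‖ ≤ 1 := by
    refine ContinuousLinearMap.opNorm_le_bound _ zero_le_one ?_
    intro v; simpa [hfstLdef] using norm_fst_le v
  have hsndn : ‖sndL‖ ≤ 1 := by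
    refine ContinuousLinearMap.opNorm_le_bound _ zero_le_one ?_
    intro v; simpa [hsndLdef] using norm_snd_le v
  set Fi : (ℂ × ℂ) → ℝ → ℂ := fun x θ =>
    (circleMap 0 r θ * I) * ((circleMap 0 r θ - x.2)⁻¹ * φ (x.1, circleMap 0 r θ)) with hFidef
  set F' : (ℂ × ℂ) → ℝ → (ℂ × ℂ) →L[ℂ] ℂ := fun x θ =>
    ((circleMap 0 r θ * I) * ((circleMap 0 r θ - x.2)⁻¹ *
        fderiv ℂ φ (x.1, circleMap 0 r θ) (1, 0))) • fstL +
      ((circleMap 0 r θ * I) * (φ (x.1, circleMap 0 r θ) *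
        (((circleMap 0 r θ - x.2) ^ 2)⁻¹))) • sndL with hF'def
  -- differentiability of the integrand
  have h_diff : ∀ θ : ℝ, ∀ x ∈ ball (z, w) δ, HasFDerivAt (fun y => Fi y θ) (F' x θ) x := by
    intro θ x hx
    obtain ⟨hx1, hxz, hx2⟩ := hball x hx
    have hdiffφ : DifferentiableAt ℂ φ (x.1, circleMap 0 r θ) :=
      hφ.differentiableAt (hHopen.mem_nhds (hmem x.1 hx1 θ))
    have h1 : HasFDerivAt (fun y : ℂ × ℂ => (y.1, circleMap 0 r θ))
        ((ContinuousLinearMap.fst ℂ ℂ ℂ).prod 0) x :=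
      (ContinuousLinearMap.fst ℂ ℂ ℂ).hasFDerivAt.prodMk (hasFDerivAt_const _ _)
    have hA : HasFDerivAt (fun y : ℂ × ℂ => φ (y.1, circleMap 0 r θ))
        ((fderiv ℂ φ (x.1, circleMap 0 r θ)).comp ((ContinuousLinearMap.fst ℂ ℂ ℂ).prod 0)) x :=
      hdiffφ.hasFDerivAt.comp x h1
    have hB0 : HasFDerivAt (fun y : ℂ × ℂ => circleMap 0 r θ - y.2) (-sndL) x := by
      have := (hasFDerivAt_const (circleMap 0 r θ) x).sub
        (ContinuousLinearMap.snd ℂ ℂ ℂ).hasFDerivAt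
      rw [zero_sub] at this
      exact this
    have hBne : circleMap 0 r θ - x.2 ≠ 0 := hne x.2 hx2 θ
    have hB : HasFDerivAt (fun y : ℂ × ℂ => (circleMap 0 r θ - y.2)⁻¹)
        ((((circleMap 0 r θ - x.2) ^ 2)⁻¹) • sndL) x := by
      have := (hasDerivAt_inv hBne).comp_hasFDerivAt x hB0
      simpa [smul_smul, Function.comp_def] using this
    have hprod := (hB.mul hA).const_mul (circleMap 0 r θ * I)
    refine hprod.congr_fderiv ?_
    refine ContinuousLinearMap.ext fun v => ?_
    have hv1 : ((v.1 : ℂ), (0 : ℂ)) = v.1 • ((1 : ℂ), (0 : ℂ)) := by simp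
    simp only [hF'def, ContinuousLinearMap.add_apply, ContinuousLinearMap.smul_apply,
      ContinuousLinearMap.coe_comp', Function.comp_apply, ContinuousLinearMap.prod_apply,
      ContinuousLinearMap.coe_fst', ContinuousLinearMap.coe_snd', ContinuousLinearMap.zero_apply,
      smul_eq_mul, hfstLdef, hsndLdef]
    have : fderiv ℂ φ (x.1, circleMap 0 r θ) (v.1, (0:ℂ)) =
        v.1 * fderiv ℂ φ (x.1, circleMap 0 r θ) (1, 0) := by
      rw [hv1, ContinuousLinearMap.map_smul, smul_eq_mul]
    rw [this]
    ring
  -- bound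
  set C : ℝ := r * (d⁻¹ * (2 * (M / s))) + r * (M * ((d ^ 2)⁻¹)) with hCdef
  have h_bound : ∀ θ : ℝ, ∀ x ∈ ball (z, w) δ, ‖F' x θ‖ ≤ C := by
    intro θ x hx
    obtain ⟨hx1, hxz, hx2⟩ := hball x hx
    have hkn : ‖circleMap 0 r θ * I‖ = r := by
      rw [norm_mul, hnormc, Complex.norm_I, mul_one]
    have hdle : d ≤ ‖circleMap 0 r θ - x.2‖ := by
      exact hden x.2 hx2 θ
    have hinv1 : ‖circleMap 0 r θ - x.2‖⁻¹ ≤ d⁻¹ := by gcongr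
    have hinv2 : (‖circleMap 0 r θ - x.2‖ ^ 2)⁻¹ ≤ (d ^ 2)⁻¹ := by gcongr
    have hfdb : ‖fderiv ℂ φ (x.1, circleMap 0 r θ) (1, 0)‖ ≤ 2 * (M / s) := by
      have h1 := (fderiv ℂ φ (x.1, circleMap 0 r θ)).le_opNorm ((1 : ℂ), (0 : ℂ))
      have h2 : ‖((1 : ℂ), (0 : ℂ))‖ = 1 := by
        rw [Prod.norm_def]; simp
      rw [h2, mul_one] at h1
      exact le_trans h1 (hfd x.1 hxz θ)
    have hφb : ‖φ (x.1, circleMap 0 r θ)‖ ≤ M := by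
      refine hM _ ?_
      refine hq_cb x.1 hxz θ ?_
      exact mem_closedBall_self hs0.le
    have hb1 : ‖(circleMap 0 r θ * I) * ((circleMap 0 r θ - x.2)⁻¹ *
        fderiv ℂ φ (x.1, circleMap 0 r θ) (1, 0))‖ ≤ r * (d⁻¹ * (2 * (M / s))) := by
      rw [norm_mul, hkn, norm_mul, norm_inv]
      gcongr
    have hb2 : ‖(circleMap 0 r θ * I) * (φ (x.1, circleMap 0 r θ) *
        (((circleMap 0 r θ - x.2) ^ 2)⁻¹))‖ ≤ r * (M * ((d ^ 2)⁻¹)) := by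
      rw [norm_mul, hkn, norm_mul, norm_inv, norm_pow]
      gcongr
    calc ‖F' x θ‖ ≤ ‖((circleMap 0 r θ * I) * ((circleMap 0 r θ - x.2)⁻¹ *
          fderiv ℂ φ (x.1, circleMap 0 r θ) (1, 0))) • fstL‖ +
          ‖((circleMap 0 r θ * I) * (φ (x.1, circleMap 0 r θ) *
          (((circleMap 0 r θ - x.2) ^ 2)⁻¹))) • sndL‖ := norm_add_le _ _
      _ ≤ r * (d⁻¹ * (2 * (M / s))) * 1 + r * (M * ((d ^ 2)⁻¹)) * 1 := by
          rw [clm_norm_smul, clm_norm_smul]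
          exact add_le_add (mul_le_mul hb1 hfstn (norm_nonneg _) (by positivity))
            (mul_le_mul hb2 hsndn (norm_nonneg _) (by positivity))
      _ = C := by rw [hCdef]; ring
  -- continuity/measurability of the integrand
  have hFi_cont : ∀ x : ℂ × ℂ, ‖x.1‖ < 1 →
      (∀ θ : ℝ, circleMap 0 r θ - x.2 ≠ 0) → Continuous (Fi x) := by
    intro x hx1 hxne
    have hc1 : Continuous fun θ : ℝ => circleMap 0 r θ * I :=
      (continuous_circleMap 0 r).mul continuous_const
    have hc2 : Continuous fun θ : ℝ => φ (x.1, circleMap 0 r θ) := by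
      refine (hφ.continuousOn.comp_continuous
        (continuous_const.prodMk (continuous_circleMap 0 r)) ?_)
      exact fun θ => hmem x.1 hx1 θ
    have hc3 : Continuous fun θ : ℝ => (circleMap 0 r θ - x.2)⁻¹ :=
      ((continuous_circleMap 0 r).sub continuous_const).inv₀ hxne
    exact hc1.mul (hc3.mul hc2)
  have hzw_ball : ∀ x : ℂ × ℂ, x ∈ ball (z, w) δ → ∀ θ : ℝ, circleMap 0 r θ - x.2 ≠ 0 := by
    intro x hx θ
    exact hne x.2 (hball x hx).2.2 θ
  have hF_meas : ∀ᶠ x in nhds (z, w), AEStronglyMeasurable (Fi x)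
      (MeasureTheory.volume.restrict (Set.uIoc (0:ℝ) (2 * Real.pi))) := by
    filter_upwards [ball_mem_nhds (z, w) hδ0] with x hx
    exact ((hFi_cont x (hball x hx).1 (hzw_ball x hx)).aestronglyMeasurable)
  have hzw_mem : (z, w) ∈ ball (z, w) δ := mem_ball_self hδ0
  have hF_int : IntervalIntegrable (Fi (z, w)) MeasureTheory.volume 0 (2 * Real.pi) :=
    (hFi_cont (z, w) hz (hzw_ball _ hzw_mem)).intervalIntegrable _ _
  have hF'_meas0 : Measurable (F' (z, w)) := by
    have m1 : Measurable fun θ : ℝ => fderiv ℂ φ (z, circleMap 0 r θ) (1, 0) := by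
      have : Measurable fun q : ℂ × ℂ => fderiv ℂ φ q ((1 : ℂ), (0 : ℂ)) :=
        measurable_fderiv_apply_const ℂ φ _
      exact this.comp (continuous_const.prodMk (continuous_circleMap 0 r)).measurable
    have m2 : Measurable fun θ : ℝ => (circleMap 0 r θ * I) *
        ((circleMap 0 r θ - w)⁻¹ * fderiv ℂ φ (z, circleMap 0 r θ) (1, 0)) := by
      apply Measurable.mul
      · exact ((continuous_circleMap 0 r).mul continuous_const).measurable
      · exact (Measurable.mul (((continuous_circleMap 0 r).sub continuous_const).measurable.inv) m1)
    have m3 : Measurable fun θ : ℝ => (circleMap 0 r θ * I) *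
        (φ (z, circleMap 0 r θ) * (((circleMap 0 r θ - w) ^ 2)⁻¹)) := by
      have hφc : Continuous fun θ : ℝ => φ (z, circleMap 0 r θ) := by
        refine (hφ.continuousOn.comp_continuous
          (continuous_const.prodMk (continuous_circleMap 0 r)) ?_)
        exact fun θ => hmem z hz θ
      apply Measurable.mul
      · exact ((continuous_circleMap 0 r).mul continuous_const).measurable
      · exact hφc.measurable.mul
          ((((continuous_circleMap 0 r).sub continuous_const).pow 2).measurable.inv)
    exact (m2.smul_const fstL).add (m3.smul_const sndL)
  have hF'_meas : AEStronglyMeasurable (F' (z, w))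
      (MeasureTheory.volume.restrict (Set.uIoc (0:ℝ) (2 * Real.pi))) :=
    hF'_meas0.aestronglyMeasurable
  have hC0 : 0 ≤ C := by
    have h1 : 0 ≤ d⁻¹ := inv_nonneg.mpr hd0.le
    have h2 : 0 ≤ M / s := div_nonneg hMnn hs0.le
    have h3 : 0 ≤ (d ^ 2)⁻¹ := inv_nonneg.mpr (by positivity)
    rw [hCdef]
    exact add_nonneg (mul_nonneg hr0.le (mul_nonneg h1 (by linarith)))
      (mul_nonneg hr0.le (mul_nonneg hMnn h3))
  have hF'_int : IntervalIntegrable (F' (z, w)) MeasureTheory.volume 0 (2 * Real.pi) := by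
    refine IntervalIntegrable.mono_fun (_root_.intervalIntegrable_const (c := C)) hF'_meas ?_
    refine MeasureTheory.ae_of_all _ fun θ => ?_
    simp only [Real.norm_eq_abs, _root_.abs_of_nonneg hC0]
    exact h_bound θ (z, w) hzw_mem
  have main := intervalIntegral.hasFDerivAt_integral_of_dominated_of_fderiv_le
    (F := Fi) (F' := F') (bound := fun _ => C) (ball_mem_nhds (z, w) hδ0) hF_meas hF_int hF'_meas
    (MeasureTheory.ae_of_all _ fun θ _ x hx => h_bound θ x hx)
    (_root_.intervalIntegrable_const)
    (MeasureTheory.ae_of_all _ fun θ _ x hx => h_diff θ x hx)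
  refine ⟨∫ θ in (0:ℝ)..(2 * Real.pi), F' (z, w) θ, main, ?_, ?_⟩
  · rw [clm_intervalIntegral_apply hF'_int]
    congr 1
    funext θ
    simp only [hF'def, ContinuousLinearMap.add_apply, ContinuousLinearMap.smul_apply,
      hfstLdef, hsndLdef, ContinuousLinearMap.coe_fst', ContinuousLinearMap.coe_snd',
      smul_eq_mul]
    ring
  · rw [clm_intervalIntegral_apply hF'_int]
    congr 1
    funext θ
    simp only [hF'def, ContinuousLinearMap.add_apply, ContinuousLinearMap.smul_apply,
      hfstLdef, hsndLdef, ContinuousLinearMap.coe_fst', ContinuousLinearMap.coe_snd',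
      smul_eq_mul]
    ring

lemma cauchy_formula_small (ε r : ℝ) (hε1 : ε < 1) (hr0 : 0 < r) (hr2 : r < 1)
    (φ : ℂ × ℂ → ℂ) (hφ : DifferentiableOn ℂ φ (hartogsFigure ε))
    (z w : ℂ) (hzε : ‖z‖ < ε) (hw : ‖w‖ < r) :
    ∫ θ in (0:ℝ)..(2 * Real.pi),
        (circleMap 0 r θ * I) * ((circleMap 0 r θ - w)⁻¹ * φ (z, circleMap 0 r θ)) =
      (2 * Real.pi * I) * φ (z, w) := by
  have hz1 : ‖z‖ < 1 := lt_trans hzε hε1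
  have hmem : ∀ ζ : ℂ, ‖ζ‖ < 1 → (z, ζ) ∈ hartogsFigure ε :=
    fun ζ hζ => ⟨⟨hz1, hζ⟩, Or.inl hzε⟩
  have hdc : DiffContOnCl ℂ (fun ζ => φ (z, ζ)) (ball 0 r) := by
    constructor
    · intro ζ hζ
      have hζ1 : ‖ζ‖ < 1 := by
        rw [mem_ball_zero_iff] at hζ
        linarith
      have : DifferentiableAt ℂ φ (z, ζ) :=
        hφ.differentiableAt ((isOpen_hartogsFigure ε).mem_nhds (hmem ζ hζ1))
      exact (this.comp ζ ((differentiableAt_const _).prodMk differentiableAt_id)).differentiableWithinAt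
    · refine ContinuousOn.mono ?_ closure_ball_subset_closedBall
      intro ζ hζ
      have hζ1 : ‖ζ‖ < 1 := by
        rw [mem_closedBall_zero_iff] at hζ
        linarith
      have : DifferentiableAt ℂ φ (z, ζ) :=
        hφ.differentiableAt ((isOpen_hartogsFigure ε).mem_nhds (hmem ζ hζ1))
      exact ((this.comp ζ ((differentiableAt_const _).prodMk
        differentiableAt_id)).continuousAt).continuousWithinAt
  have hwball : w ∈ ball (0 : ℂ) r := by
    rw [mem_ball_zero_iff]; exact hw
  have h := hdc.circleIntegral_sub_inv_smul hwball
  have hconv : (∮ ζ in C(0, r), (ζ - w)⁻¹ • φ (z, ζ)) =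
      ∫ θ in (0:ℝ)..(2 * Real.pi),
        (circleMap 0 r θ * I) * ((circleMap 0 r θ - w)⁻¹ * φ (z, circleMap 0 r θ)) := by
    simp only [circleIntegral, deriv_circleMap, smul_eq_mul]
  rw [hconv] at h
  rw [h, smul_eq_mul]

lemma swap_deriv_integral (ε r : ℝ) (hε0 : 0 < ε) (hε1 : ε < 1) (hr1 : 1 - ε < r) (hr2 : r < 1)
    (φ : ℂ × ℂ → ℂ) (hφ : DifferentiableOn ℂ φ (hartogsFigure ε))
    (z w : ℂ) (hz : ‖z‖ < 1) (hw : ‖w‖ < r) :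
    ∫ θ in (0:ℝ)..(2 * Real.pi), (circleMap 0 r θ * I) *
        ((circleMap 0 r θ - w)⁻¹ * deriv (fun ζ => φ (z, ζ)) (circleMap 0 r θ)) =
      ∫ θ in (0:ℝ)..(2 * Real.pi), (circleMap 0 r θ * I) *
        (φ (z, circleMap 0 r θ) * (((circleMap 0 r θ - w) ^ 2)⁻¹)) := by
  have hr0 : 0 < r := by linarith
  set ρ : ℝ := max (‖w‖) (1 - ε) with hρdef
  have hρr : ρ < r := max_lt hw hr1
  set V : Set ℂ := {ζ : ℂ | ρ < ‖ζ‖ ∧ ‖ζ‖ < 1} with hVdef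
  have hVopen : IsOpen V :=
    (isOpen_lt continuous_const continuous_norm).inter
      (isOpen_lt continuous_norm continuous_const)
  have hmemH : ∀ ζ ∈ V, (z, ζ) ∈ hartogsFigure ε := by
    rintro ζ ⟨h1, h2⟩
    exact ⟨⟨hz, h2⟩, Or.inr (lt_of_le_of_lt (le_max_right _ _) h1)⟩
  have hfzV : ∀ ζ ∈ V, DifferentiableAt ℂ (fun ζ' => φ (z, ζ')) ζ := by
    intro ζ hζ
    have : DifferentiableAt ℂ φ (z, ζ) :=
      hφ.differentiableAt ((isOpen_hartogsFigure ε).mem_nhds (hmemH ζ hζ))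
    exact this.comp ζ ((differentiableAt_const _).prodMk differentiableAt_id)
  have hfzV' : DifferentiableOn ℂ (fun ζ' => φ (z, ζ')) V :=
    fun ζ hζ => (hfzV ζ hζ).differentiableWithinAt
  have hdcont : ContinuousOn (deriv (fun ζ' => φ (z, ζ'))) V :=
    ((hfzV'.analyticOnNhd hVopen).deriv).continuousOn
  have hne : ∀ ζ ∈ V, ζ - w ≠ 0 := by
    rintro ζ ⟨h1, _⟩ h0
    have : ζ = w := by
      have := sub_eq_zero.mp h0; exact this
    rw [this] at h1
    have := le_max_left (‖w‖) (1 - ε)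
    rw [← hρdef] at this
    linarith
  have hmapV : ∀ θ : ℝ, circleMap 0 r θ ∈ V := by
    intro θ
    have : ‖circleMap 0 r θ‖ = r := by
      rw [norm_circleMap_zero, abs_of_pos hr0]
    exact ⟨by rw [this]; exact hρr, by rw [this]; exact hr2⟩
  set dfz : ℂ → ℂ := deriv (fun ζ' => φ (z, ζ')) with hdfzdef
  set ψ' : ℂ → ℂ := fun ζ =>
    (-1) / (ζ - w) ^ 2 * φ (z, ζ) + (ζ - w)⁻¹ * dfz ζ with hψ'def
  have hψ : ∀ ζ ∈ V, HasDerivAt (fun ζ' => (ζ' - w)⁻¹ * φ (z, ζ')) (ψ' ζ) ζ := by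
    intro ζ hζ
    have hinv : HasDerivAt (fun ζ' : ℂ => (ζ' - w)⁻¹) ((-1) / (ζ - w) ^ 2) ζ := by
      have h1 : HasDerivAt (fun ζ' : ℂ => ζ' - w) 1 ζ := (hasDerivAt_id ζ).sub_const w
      have := h1.inv (hne ζ hζ)
      simpa [Pi.inv_def] using this
    exact hinv.mul ((hfzV ζ hζ).hasDerivAt)
  have hcomp : ∀ θ : ℝ, HasDerivAt
      (fun t => (circleMap 0 r t - w)⁻¹ * φ (z, circleMap 0 r t))
      (ψ' (circleMap 0 r θ) * (circleMap 0 r θ * I)) θ := by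
    intro θ
    exact (hψ _ (hmapV θ)).comp θ (hasDerivAt_circleMap 0 r θ)
  have hcontV : ContinuousOn ψ' V := by
    have c1 : ContinuousOn (fun ζ : ℂ => (-1) / (ζ - w) ^ 2) V := by
      refine ContinuousOn.div continuousOn_const ?_ ?_
      · exact ((continuous_id.sub continuous_const).pow 2).continuousOn
      · exact fun ζ hζ => pow_ne_zero 2 (hne ζ hζ)
    have c2 : ContinuousOn (fun ζ : ℂ => φ (z, ζ)) V := hfzV'.continuousOn
    have c3 : ContinuousOn (fun ζ : ℂ => (ζ - w)⁻¹) V := by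
      refine ContinuousOn.inv₀ ((continuous_id.sub continuous_const).continuousOn) ?_
      exact fun ζ hζ => hne ζ hζ
    exact (c1.mul c2).add (c3.mul hdcont)
  have hcont_h' : Continuous fun θ : ℝ => ψ' (circleMap 0 r θ) * (circleMap 0 r θ * I) := by
    have : Continuous fun θ : ℝ => ψ' (circleMap 0 r θ) :=
      hcontV.comp_continuous (continuous_circleMap 0 r) hmapV
    exact this.mul ((continuous_circleMap 0 r).mul continuous_const)
  have hivp : ∫ θ in (0:ℝ)..(2 * Real.pi), ψ' (circleMap 0 r θ) * (circleMap 0 r θ * I) =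
      (fun t => (circleMap 0 r t - w)⁻¹ * φ (z, circleMap 0 r t)) (2 * Real.pi) -
      (fun t => (circleMap 0 r t - w)⁻¹ * φ (z, circleMap 0 r t)) 0 :=
    intervalIntegral.integral_eq_sub_of_hasDerivAt (fun t _ => hcomp t)
      (hcont_h'.intervalIntegrable _ _)
  have hper : circleMap 0 r (2 * Real.pi) = circleMap 0 r 0 := by
    have := periodic_circleMap 0 r 0
    simpa using this
  simp only [hper, sub_self] at hivp
  -- now split the integral
  have hcA : Continuous fun θ : ℝ => (circleMap 0 r θ * I) *
      ((circleMap 0 r θ - w)⁻¹ * dfz (circleMap 0 r θ)) := by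
    have hg1 : ContinuousOn (fun ζ : ℂ => (ζ - w)⁻¹ * dfz ζ) V :=
      (ContinuousOn.inv₀ ((continuous_id.sub continuous_const).continuousOn)
        (fun ζ hζ => hne ζ hζ)).mul hdcont
    have c1 : Continuous fun θ : ℝ => (circleMap 0 r θ - w)⁻¹ * dfz (circleMap 0 r θ) :=
      hg1.comp_continuous (continuous_circleMap 0 r) hmapV
    exact ((continuous_circleMap 0 r).mul continuous_const).mul c1
  have hcB : Continuous fun θ : ℝ => (circleMap 0 r θ * I) *
      (φ (z, circleMap 0 r θ) * (((circleMap 0 r θ - w) ^ 2)⁻¹)) := by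
    have hg2 : ContinuousOn (fun ζ : ℂ => φ (z, ζ) * (((ζ - w) ^ 2)⁻¹)) V :=
      (hfzV'.continuousOn).mul (ContinuousOn.inv₀
        (((continuous_id.sub continuous_const).pow 2).continuousOn)
        (fun ζ hζ => pow_ne_zero 2 (hne ζ hζ)))
    have c1 : Continuous fun θ : ℝ => φ (z, circleMap 0 r θ) * (((circleMap 0 r θ - w) ^ 2)⁻¹) :=
      hg2.comp_continuous (continuous_circleMap 0 r) hmapV
    exact ((continuous_circleMap 0 r).mul continuous_const).mul c1
  have hsplit : ∀ θ : ℝ, ψ' (circleMap 0 r θ) * (circleMap 0 r θ * I) =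
      (circleMap 0 r θ * I) * ((circleMap 0 r θ - w)⁻¹ * dfz (circleMap 0 r θ)) -
      (circleMap 0 r θ * I) * (φ (z, circleMap 0 r θ) * (((circleMap 0 r θ - w) ^ 2)⁻¹)) := by
    intro θ
    rw [hψ'def]
    have hne' : (circleMap 0 r θ - w) ≠ 0 := hne _ (hmapV θ)
    field_simp
    ring
  rw [intervalIntegral.integral_congr (g := fun θ =>
      (circleMap 0 r θ * I) * ((circleMap 0 r θ - w)⁻¹ * dfz (circleMap 0 r θ)) -
      (circleMap 0 r θ * I) * (φ (z, circleMap 0 r θ) * (((circleMap 0 r θ - w) ^ 2)⁻¹)))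
      (fun θ _ => hsplit θ)] at hivp
  rw [intervalIntegral.integral_sub (hcA.intervalIntegrable _ _)
      (hcB.intervalIntegrable _ _)] at hivp
  exact sub_eq_zero.mp hivp

/-- A closed holomorphic 1-form `f dz + g dw` on the Hartogs figure `H_ε` extends to a
closed holomorphic 1-form on the bidisk. -/
theorem hartogs_extension_closed_one_form (ε : ℝ) (hε0 : 0 < ε) (hε1 : ε < 1)
    (f g : ℂ × ℂ → ℂ)
    (hf : DifferentiableOn ℂ f (hartogsFigure ε))
    (hg : DifferentiableOn ℂ g (hartogsFigure ε))
    (hclosed : ∀ p ∈ hartogsFigure ε,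
      deriv (fun w => f (p.1, w)) p.2 = deriv (fun z => g (z, p.2)) p.1) :
    ∃ F G : ℂ × ℂ → ℂ,
      DifferentiableOn ℂ F bidisk ∧ DifferentiableOn ℂ G bidisk ∧
      (∀ p ∈ bidisk,
        deriv (fun w => F (p.1, w)) p.2 = deriv (fun z => G (z, p.2)) p.1) ∧
      Set.EqOn F f (hartogsFigure ε) ∧ Set.EqOn G g (hartogsFigure ε) := by
  set r : ℝ := 1 - ε / 2 with hrdef
  have hr0 : 0 < r := by rw [hrdef]; linarith
  have hr1 : 1 - ε < r := by rw [hrdef]; linarith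
  have hr2 : r < 1 := by rw [hrdef]; linarith
  have hHopen := isOpen_hartogsFigure ε
  have h2πI : (2 * (Real.pi : ℂ) * I) ≠ 0 := Complex.two_pi_I_ne_zero
  have habsc : ∀ θ : ℝ, ‖circleMap 0 r θ‖ = r := by
    intro θ; rw [norm_circleMap_zero, abs_of_pos hr0]
  have hmemc : ∀ (a : ℂ), ‖a‖ < 1 → ∀ θ : ℝ,
      (a, circleMap 0 r θ) ∈ hartogsFigure ε := by
    intro a ha θ
    exact ⟨⟨ha, by rw [habsc]; exact hr2⟩, Or.inr (by
      show (1 : ℝ) - ε < ‖circleMap 0 r θ‖; rw [habsc]; exact hr1)⟩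
  -- the extension operator
  set Ext : (ℂ × ℂ → ℂ) → ℂ × ℂ → ℂ := fun φ x =>
    if ‖x.2‖ < r then
      (2 * (Real.pi : ℂ) * I)⁻¹ * ∫ θ in (0:ℝ)..(2 * Real.pi),
        (circleMap 0 r θ * I) * ((circleMap 0 r θ - x.2)⁻¹ * φ (x.1, circleMap 0 r θ))
    else φ x with hExtdef
  -- agreement on the Hartogs figure
  have agree : ∀ (φ : ℂ × ℂ → ℂ), DifferentiableOn ℂ φ (hartogsFigure ε) →
      ∀ p : ℂ × ℂ, p ∈ hartogsFigure ε → ‖p.2‖ < r →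
      (2 * (Real.pi : ℂ) * I)⁻¹ * (∫ θ in (0:ℝ)..(2 * Real.pi),
        (circleMap 0 r θ * I) * ((circleMap 0 r θ - p.2)⁻¹ * φ (p.1, circleMap 0 r θ))) = φ p := by
    intro φ hφ p hp hp2
    obtain ⟨⟨hp1, hp2'⟩, hcase⟩ := hp
    rcases hcase with hsmall | hbig
    · rw [cauchy_formula_small ε r hε1 hr0 hr2 φ hφ p.1 p.2 hsmall hp2]
      rw [← mul_assoc, inv_mul_cancel₀ h2πI, one_mul, Prod.mk.eta]
    · -- identity theorem in the first variable
      have hu : DifferentiableOn ℂ (fun z => (2 * (Real.pi : ℂ) * I)⁻¹ *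
          ∫ θ in (0:ℝ)..(2 * Real.pi),
            (circleMap 0 r θ * I) * ((circleMap 0 r θ - p.2)⁻¹ * φ (z, circleMap 0 r θ)))
          (ball (0:ℂ) 1) := by
        intro z' hz'
        rw [mem_ball_zero_iff] at hz'
        obtain ⟨L, hL, -, -⟩ := cauchy_hasFDerivAt ε r hε0 hε1 hr1 hr2 φ hφ z' p.2
          (by exact hz') hp2
        have hslice : DifferentiableAt ℂ (fun z'' : ℂ =>
            ∫ θ in (0:ℝ)..(2 * Real.pi),
              (circleMap 0 r θ * I) * ((circleMap 0 r θ - p.2)⁻¹ * φ (z'', circleMap 0 r θ))) z' :=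
          by
            have hpr : DifferentiableAt ℂ (fun z'' : ℂ => (z'', p.2)) z' :=
              differentiableAt_id.prodMk (differentiableAt_const _)
            exact hL.differentiableAt.comp z' hpr
        exact (hslice.const_mul _).differentiableWithinAt
      have hv : DifferentiableOn ℂ (fun z => φ (z, p.2)) (ball (0:ℂ) 1) := by
        intro z' hz'
        rw [mem_ball_zero_iff] at hz'
        have : DifferentiableAt ℂ φ (z', p.2) := by
          refine hφ.differentiableAt (hHopen.mem_nhds ?_)
          exact ⟨⟨by exact hz', hp2'⟩, Or.inr hbig⟩
        exact (this.comp z' (differentiableAt_id.prodMk (differentiableAt_const _))).differentiableWithinAt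
      have heq := (hu.analyticOnNhd isOpen_ball).eqOn_of_preconnected_of_eventuallyEq
        ((hv.analyticOnNhd isOpen_ball)) (convex_ball (0:ℂ) 1).isPreconnected
        (mem_ball_self one_pos) ?_
      · exact heq (by rw [mem_ball_zero_iff]; exact hp1)
      · filter_upwards [Metric.ball_mem_nhds (0:ℂ) hε0] with z' hz'
        rw [mem_ball_zero_iff] at hz'
        rw [cauchy_formula_small ε r hε1 hr0 hr2 φ hφ z' p.2 hz' hp2]
        rw [← mul_assoc, inv_mul_cancel₀ h2πI, one_mul]
  have hExtEq : ∀ (φ : ℂ × ℂ → ℂ), DifferentiableOn ℂ φ (hartogsFigure ε) →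
      Set.EqOn (Ext φ) φ (hartogsFigure ε) := by
    intro φ hφ p hp
    by_cases h : ‖p.2‖ < r
    · rw [hExtdef]
      simp only []
      rw [if_pos h]
      exact agree φ hφ p hp h
    · rw [hExtdef]
      simp only []
      rw [if_neg h]
  -- near points with big second coordinate, Ext φ agrees with φ
  have hExtNear : ∀ (φ : ℂ × ℂ → ℂ), DifferentiableOn ℂ φ (hartogsFigure ε) →
      ∀ p : ℂ × ℂ, p ∈ bidisk → ¬ (‖p.2‖ < r) →
      (Ext φ =ᶠ[nhds p] φ) ∧ p ∈ hartogsFigure ε := by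
    intro φ hφ p hp h
    have hpr : r ≤ ‖p.2‖ := not_lt.mp h
    set N : Set (ℂ × ℂ) := {x : ℂ × ℂ | (‖x.1‖ < 1 ∧ ‖x.2‖ < 1) ∧
      1 - ε < ‖x.2‖} with hNdef
    have hNopen : IsOpen N := by
      have h1 : Continuous fun x : ℂ × ℂ => ‖x.1‖ := continuous_norm.comp continuous_fst
      have h2 : Continuous fun x : ℂ × ℂ => ‖x.2‖ := continuous_norm.comp continuous_snd
      exact ((isOpen_lt h1 continuous_const).inter (isOpen_lt h2 continuous_const)).inter
        (isOpen_lt continuous_const h2)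
    have hNsub : N ⊆ hartogsFigure ε := fun x hx => ⟨hx.1, Or.inr hx.2⟩
    have hpN : p ∈ N := ⟨⟨hp.1, hp.2⟩, by linarith⟩
    refine ⟨?_, hNsub hpN⟩
    filter_upwards [hNopen.mem_nhds hpN] with x hx
    exact hExtEq φ hφ (hNsub hx)
  -- differentiability
  have hExtDiff : ∀ (φ : ℂ × ℂ → ℂ), DifferentiableOn ℂ φ (hartogsFigure ε) →
      DifferentiableOn ℂ (Ext φ) bidisk := by
    intro φ hφ p hp
    by_cases h : ‖p.2‖ < r
    · obtain ⟨L, hL, -, -⟩ := cauchy_hasFDerivAt ε r hε0 hε1 hr1 hr2 φ hφ p.1 p.2 hp.1 h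
      have hL' : DifferentiableAt ℂ (fun x : ℂ × ℂ =>
          ∫ θ in (0:ℝ)..(2 * Real.pi),
            (circleMap 0 r θ * I) * ((circleMap 0 r θ - x.2)⁻¹ * φ (x.1, circleMap 0 r θ))) p := by
        have := hL.differentiableAt
        rwa [Prod.mk.eta] at this
      have hconst : DifferentiableAt ℂ (fun x : ℂ × ℂ =>
          (2 * (Real.pi : ℂ) * I)⁻¹ * ∫ θ in (0:ℝ)..(2 * Real.pi),
            (circleMap 0 r θ * I) * ((circleMap 0 r θ - x.2)⁻¹ * φ (x.1, circleMap 0 r θ))) p :=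
        hL'.const_mul _
      have hev : Ext φ =ᶠ[nhds p] (fun x : ℂ × ℂ =>
          (2 * (Real.pi : ℂ) * I)⁻¹ * ∫ θ in (0:ℝ)..(2 * Real.pi),
            (circleMap 0 r θ * I) * ((circleMap 0 r θ - x.2)⁻¹ * φ (x.1, circleMap 0 r θ))) := by
        have hopen : IsOpen {x : ℂ × ℂ | ‖x.2‖ < r} :=
          isOpen_lt (continuous_norm.comp continuous_snd) continuous_const
        filter_upwards [hopen.mem_nhds h] with x hx
        rw [hExtdef]; simp only []; rw [if_pos hx]
      exact (hconst.congr_of_eventuallyEq hev).differentiableWithinAt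
    · obtain ⟨hev, hpH⟩ := hExtNear φ hφ p hp h
      have : DifferentiableAt ℂ φ p := hφ.differentiableAt (hHopen.mem_nhds hpH)
      exact (this.congr_of_eventuallyEq hev).differentiableWithinAt
  -- slice derivative formulas on the small region
  have hSliceW : ∀ (φ : ℂ × ℂ → ℂ), DifferentiableOn ℂ φ (hartogsFigure ε) →
      ∀ p : ℂ × ℂ, p ∈ bidisk → ‖p.2‖ < r →
      deriv (fun w => Ext φ (p.1, w)) p.2 = (2 * (Real.pi : ℂ) * I)⁻¹ *
        ∫ θ in (0:ℝ)..(2 * Real.pi), (circleMap 0 r θ * I) *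
          (φ (p.1, circleMap 0 r θ) * (((circleMap 0 r θ - p.2) ^ 2)⁻¹)) := by
    intro φ hφ p hp h
    obtain ⟨L, hL, hL01, -⟩ := cauchy_hasFDerivAt ε r hε0 hε1 hr1 hr2 φ hφ p.1 p.2 hp.1 h
    have hev : (fun w => Ext φ (p.1, w)) =ᶠ[nhds p.2] (fun w =>
        (2 * (Real.pi : ℂ) * I)⁻¹ * ∫ θ in (0:ℝ)..(2 * Real.pi),
          (circleMap 0 r θ * I) * ((circleMap 0 r θ - w)⁻¹ * φ (p.1, circleMap 0 r θ))) := by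
      have hopen : IsOpen {w : ℂ | ‖w‖ < r} :=
        isOpen_lt continuous_norm continuous_const
      filter_upwards [hopen.mem_nhds h] with w hw
      rw [hExtdef]; simp only []; rw [if_pos hw]
    rw [hev.deriv_eq]
    have hd : HasDerivAt (fun w => (2 * (Real.pi : ℂ) * I)⁻¹ *
        ∫ θ in (0:ℝ)..(2 * Real.pi),
          (circleMap 0 r θ * I) * ((circleMap 0 r θ - w)⁻¹ * φ (p.1, circleMap 0 r θ)))
        ((2 * (Real.pi : ℂ) * I)⁻¹ * L (0, 1)) p.2 :=
      (slice_snd_hasDerivAt hL).const_mul _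
    rw [hd.deriv, hL01]
  have hSliceZ : ∀ (φ : ℂ × ℂ → ℂ), DifferentiableOn ℂ φ (hartogsFigure ε) →
      ∀ p : ℂ × ℂ, p ∈ bidisk → ‖p.2‖ < r →
      deriv (fun z => Ext φ (z, p.2)) p.1 = (2 * (Real.pi : ℂ) * I)⁻¹ *
        ∫ θ in (0:ℝ)..(2 * Real.pi), (circleMap 0 r θ * I) *
          ((circleMap 0 r θ - p.2)⁻¹ * fderiv ℂ φ (p.1, circleMap 0 r θ) (1, 0)) := by
    intro φ hφ p hp h
    obtain ⟨L, hL, -, hL10⟩ := cauchy_hasFDerivAt ε r hε0 hε1 hr1 hr2 φ hφ p.1 p.2 hp.1 h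
    have hfun : (fun z => Ext φ (z, p.2)) = (fun z =>
        (2 * (Real.pi : ℂ) * I)⁻¹ * ∫ θ in (0:ℝ)..(2 * Real.pi),
          (circleMap 0 r θ * I) * ((circleMap 0 r θ - p.2)⁻¹ * φ (z, circleMap 0 r θ))) := by
      funext z'
      rw [hExtdef]; simp only []; rw [if_pos h]
    rw [hfun]
    have hd : HasDerivAt (fun z => (2 * (Real.pi : ℂ) * I)⁻¹ *
        ∫ θ in (0:ℝ)..(2 * Real.pi),
          (circleMap 0 r θ * I) * ((circleMap 0 r θ - p.2)⁻¹ * φ (z, circleMap 0 r θ)))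
        ((2 * (Real.pi : ℂ) * I)⁻¹ * L (1, 0)) p.1 :=
      (slice_fst_hasDerivAt hL).const_mul _
    rw [hd.deriv, hL10]
  -- assembling
  refine ⟨Ext f, Ext g, hExtDiff f hf, hExtDiff g hg, ?_, hExtEq f hf, hExtEq g hg⟩
  intro p hp
  by_cases h : ‖p.2‖ < r
  · rw [hSliceW f hf p hp h, hSliceZ g hg p hp h]
    congr 1
    have hintg : ∀ θ : ℝ, fderiv ℂ g (p.1, circleMap 0 r θ) (1, 0) =
        deriv (fun w => f (p.1, w)) (circleMap 0 r θ) := by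
      intro θ
      have hmemθ : (p.1, circleMap 0 r θ) ∈ hartogsFigure ε := hmemc p.1 hp.1 θ
      have hdg : DifferentiableAt ℂ g (p.1, circleMap 0 r θ) :=
        hg.differentiableAt (hHopen.mem_nhds hmemθ)
      rw [← deriv_slice_fst hdg]
      exact (hclosed (p.1, circleMap 0 r θ) hmemθ).symm
    have : (∫ θ in (0:ℝ)..(2 * Real.pi), (circleMap 0 r θ * I) *
        ((circleMap 0 r θ - p.2)⁻¹ * fderiv ℂ g (p.1, circleMap 0 r θ) (1, 0))) =
        ∫ θ in (0:ℝ)..(2 * Real.pi), (circleMap 0 r θ * I) *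
        ((circleMap 0 r θ - p.2)⁻¹ * deriv (fun ζ => f (p.1, ζ)) (circleMap 0 r θ)) := by
      refine intervalIntegral.integral_congr fun θ _ => ?_
      rw [hintg θ]
    rw [this, swap_deriv_integral ε r hε0 hε1 hr1 hr2 f hf p.1 p.2 hp.1 h]
  · obtain ⟨hevf, hpH⟩ := hExtNear f hf p hp h
    obtain ⟨hevg, -⟩ := hExtNear g hg p hp h
    have htw : Filter.Tendsto (fun w : ℂ => (p.1, w)) (nhds p.2) (nhds p) := by
      have := ((continuous_const : Continuous fun _ : ℂ => p.1).prodMk continuous_id).tendsto p.2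
      exact this
    have htz : Filter.Tendsto (fun z : ℂ => (z, p.2)) (nhds p.1) (nhds p) := by
      have := (continuous_id.prodMk (continuous_const : Continuous fun _ : ℂ => p.2)).tendsto p.1
      exact this
    have hsf : (fun w => Ext f (p.1, w)) =ᶠ[nhds p.2] (fun w => f (p.1, w)) :=
      htw.eventually hevf
    have hsg : (fun z => Ext g (z, p.2)) =ᶠ[nhds p.1] (fun z => g (z, p.2)) :=
      htz.eventually hevg
    rw [hsf.deriv_eq, hsg.deriv_eq]
    exact hclosed p hpH
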